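/- Let f ∈ ℂ[X₀,X₁] be homogeneous of degree d ≥ 2 and squarefree. Then the ℂ-vector space R_f^{2d−4} = S^{2d−4}/(S^{2d−4} ∩ J_f) has dimension exactly 1; that is, there exists h ∈ S^{2d−4} with h ∉ J_f, and for any two h, h′ ∈ S^{2d−4} with h ∉ J_f there is a scalar c ∈ ℂ with h′ − c·h ∈ J_f. -/

import Mathlib

open MvPolynomial

/-- The Jacobian ideal of a binary form `f ∈ ℂ[X₀,X₁]`: the ideal generated by the two
partial derivatives of `f`. -/
noncomputable def jacIdeal (f : MvPolynomial (Fin 2) ℂ) : Ideal (MvPolynomial (Fin 2) ℂ) :=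
  Ideal.span {pderiv 0 f, pderiv 1 f}

section Aux
open Finsupp

lemma deg2 (m : Fin 2 →₀ ℕ) : m.degree = m 0 + m 1 := by
  rw [Finsupp.degree_apply]
  rw [Finset.sum_subset (Finset.subset_univ m.support)]
  · simp [Fin.sum_univ_two]
  · intro x _ hx; simpa using Finsupp.notMem_support_iff.mp hx

lemma isHomog_of_coeff {p : MvPolynomial (Fin 2) ℂ} {n : ℕ}
    (h : ∀ d : Fin 2 →₀ ℕ, MvPolynomial.coeff d p ≠ 0 → d.degree = n) : p.IsHomogeneous n := by
  intro d hd; simpa [Finsupp.weight, Finsupp.linearCombination, Finsupp.degree_apply, Finsupp.sum] using h d hd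

lemma coeff_pderiv (i : Fin 2) (m : Fin 2 →₀ ℕ) (f : MvPolynomial (Fin 2) ℂ) :
    MvPolynomial.coeff m (pderiv i f) = (m i + 1 : ℕ) * MvPolynomial.coeff (m + single i 1) f := by
  induction f using MvPolynomial.induction_on' with
  | monomial s a =>
    rw [pderiv_monomial]
    by_cases h : s = m + single i 1
    · subst h
      have h2 : (m + single i 1) - single i 1 = m := by simp
      rw [MvPolynomial.coeff_monomial, MvPolynomial.coeff_monomial, h2, if_pos rfl, if_pos rfl]
      rw [Finsupp.add_apply]
      push_cast
      simp
      ring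
    · rw [MvPolynomial.coeff_monomial, MvPolynomial.coeff_monomial, if_neg h, mul_zero]
      by_cases h2 : (s - single i 1 : Fin 2 →₀ ℕ) = m
      · rw [if_pos h2]
        by_cases h3 : s i = 0
        · simp [h3]
        · exfalso; apply h
          ext j
          by_cases hj : j = i
          · subst hj; rw [← h2]; simp; omega
          · rw [← h2]; simp [Finsupp.single_apply, hj, Ne.symm hj]
      · rw [if_neg h2]
  | add p q hp hq => simp [hp, hq, mul_add]

section
variable {p : MvPolynomial (Fin 2) ℂ}

lemma pderiv_isHomog {n : ℕ} (i : Fin 2) (hp : p.IsHomogeneous (n + 1)) :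
    (pderiv i p).IsHomogeneous n := by
  apply isHomog_of_coeff
  intro d hd
  rw [coeff_pderiv] at hd
  have h2 : MvPolynomial.coeff (d + single i 1) p ≠ 0 := by
    intro h; rw [h, mul_zero] at hd; exact hd rfl
  have h3 : (d + single i 1).degree = n + 1 := by
    by_contra h; exact h2 (hp.coeff_eq_zero h)
  rw [deg2] at h3 ⊢
  simp only [Finsupp.add_apply] at h3
  fin_cases i <;> simp [Finsupp.single_apply] at h3 <;> omega

lemma euler_key (i : Fin 2) (m : Fin 2 →₀ ℕ) (a : ℂ) :
    X i * pderiv i (monomial m a) = monomial m (a * m i) := by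
  rw [pderiv_monomial, X, monomial_mul, one_mul]
  by_cases h : m i = 0
  · simp [h]
  · have hexp : single i 1 + (m - single i 1) = m := by
      ext j
      by_cases hj : j = i
      · subst hj; simp; omega
      · simp [Finsupp.single_apply, hj, Ne.symm hj]
    rw [hexp]

lemma euler {n : ℕ} (hp : p.IsHomogeneous n) :
    MvPolynomial.C (n : ℂ) * p = X 0 * pderiv 0 p + X 1 * pderiv 1 p := by
  conv_lhs => rw [p.as_sum]
  conv_rhs => rw [p.as_sum]
  rw [map_sum (pderiv 0), map_sum (pderiv 1), Finset.mul_sum, Finset.mul_sum, Finset.mul_sum,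
    ← Finset.sum_add_distrib]
  refine Finset.sum_congr rfl fun m hm => ?_
  rw [euler_key, euler_key, ← map_add, C_mul_monomial]
  congr 1
  have hdeg : m.degree = n := by
    by_contra h
    exact (MvPolynomial.mem_support_iff.mp hm) (hp.coeff_eq_zero h)
  rw [deg2] at hdeg
  push_cast [← hdeg]
  ring

lemma eq_C_of_pderiv_zero (h0 : pderiv 0 p = 0) (h1 : pderiv 1 p = 0) :
    ∃ c : ℂ, p = MvPolynomial.C c := by
  refine ⟨MvPolynomial.coeff 0 p, MvPolynomial.ext _ _ fun m => ?_⟩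
  rw [MvPolynomial.coeff_C]
  by_cases hm : (0 : Fin 2 →₀ ℕ) = m
  · rw [if_pos hm, hm]
  · rw [if_neg hm]
    have : ∃ i, m i ≠ 0 := by
      by_contra h; push_neg at h
      exact hm ((Finsupp.ext fun j => h j).symm)
    obtain ⟨i, hi⟩ := this
    have hz : pderiv i p = 0 := by fin_cases i <;> assumption
    set m' : Fin 2 →₀ ℕ := m - single i 1 with hm'
    have hexp : m' + single i 1 = m := by
      ext j
      by_cases hj : j = i
      · subst hj; simp [hm']; omega
      · simp [hm', Finsupp.single_apply, hj, Ne.symm hj]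
    have hc := coeff_pderiv i m' p
    rw [hz, hexp, MvPolynomial.coeff_zero] at hc
    have hne : ((m' i + 1 : ℕ) : ℂ) ≠ 0 := Nat.cast_ne_zero.mpr (by omega)
    exact ((mul_eq_zero.mp hc.symm).resolve_left hne)
end

section
variable {a b g u : MvPolynomial (Fin 2) ℂ}

lemma hc_of_homog {k : ℕ} (hg : g.IsHomogeneous k) (n : ℕ) :
    homogeneousComponent n g = if n = k then g else 0 :=
  homogeneousComponent_of_mem ((mem_homogeneousSubmodule _ _).mpr hg)

lemma hc_mul_pair (a b : MvPolynomial (Fin 2) ℂ) (ka kb : ℕ)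
    (h1 : ka ≤ a.totalDegree) (h2 : kb ≤ b.totalDegree)
    (hkill : ∀ k l : ℕ, ka + kb = k + l → k ≠ ka →
      homogeneousComponent k a * homogeneousComponent l b = 0) :
    homogeneousComponent (ka + kb) (a * b)
      = homogeneousComponent ka a * homogeneousComponent kb b := by
  conv_lhs => rw [← sum_homogeneousComponent a, ← sum_homogeneousComponent b]
  rw [Finset.sum_mul_sum, map_sum]
  have step : ∀ k, (homogeneousComponent (ka + kb))
      (∑ l ∈ Finset.range (b.totalDegree + 1),
        homogeneousComponent k a * homogeneousComponent l b)
      = ∑ l ∈ Finset.range (b.totalDegree + 1),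
        (if ka + kb = k + l then homogeneousComponent k a * homogeneousComponent l b else 0) := by
    intro k
    rw [map_sum]
    refine Finset.sum_congr rfl fun l _ => ?_
    exact hc_of_homog ((homogeneousComponent_isHomogeneous k a).mul
      (homogeneousComponent_isHomogeneous l b)) _
  rw [Finset.sum_congr rfl fun k _ => step k]
  rw [Finset.sum_eq_single ka]
  · have : ∀ l ∈ Finset.range (b.totalDegree + 1),
        (if ka + kb = ka + l then homogeneousComponent ka a * homogeneousComponent l b else 0)
        = (if kb = l then homogeneousComponent ka a * homogeneousComponent l b else 0) := by
      intro l _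
      congr 1
      simp [Nat.add_left_cancel_iff]
    rw [Finset.sum_congr rfl this, Finset.sum_ite_eq,
      if_pos (Finset.mem_range.mpr (by omega))]
  · intro k _ hk
    refine Finset.sum_eq_zero fun l _ => ?_
    split
    · exact hkill k l (by assumption) hk
    · rfl
  · intro h
    exact absurd (Finset.mem_range.mpr (by omega)) h

lemma hc_mul_right {m : ℕ} (hg : g.IsHomogeneous m) (n : ℕ) :
    homogeneousComponent (n + m) (a * g)
      = homogeneousComponent n a * g := by
  by_cases hz : g = 0
  · simp [hz]
  by_cases hn : n ≤ a.totalDegree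
  · have hm : m ≤ g.totalDegree := le_of_eq (hg.totalDegree hz).symm
    rw [hc_mul_pair a g n m hn hm, hc_of_homog hg, if_pos rfl]
    intro k l hkl hk
    rw [hc_of_homog hg l, if_neg (by omega), mul_zero]
  · push_neg at hn
    rw [homogeneousComponent_eq_zero _ _ hn, zero_mul]
    apply (homogeneousComponent_eq_zero _ _)
    calc (a * g).totalDegree ≤ a.totalDegree + g.totalDegree := totalDegree_mul a g
    _ ≤ a.totalDegree + m := by have := hg.totalDegree_le; omega
    _ < n + m := by omega

lemma hc_mul_right_zero {m n : ℕ} (hg : g.IsHomogeneous m) (h : n < m) :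
    homogeneousComponent n (a * g) = 0 := by
  by_cases hz : g = 0
  · simp [hz]
  ext d
  rw [coeff_homogeneousComponent]
  split
  · next hd =>
    rw [← sum_homogeneousComponent a, Finset.sum_mul]
    rw [MvPolynomial.coeff_sum]
    refine Finset.sum_eq_zero fun k _ => ?_
    have hh : (homogeneousComponent k a * g).IsHomogeneous (k + m) :=
      (homogeneousComponent_isHomogeneous k a).mul hg
    exact hh.coeff_eq_zero (by omega)
  · simp

lemma homog_dvd_eq_zero {e m : ℕ} (hu : u.IsHomogeneous e) (hg : g.IsHomogeneous m)
    (h : e < m) (hdvd : g ∣ u) : u = 0 := by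
  obtain ⟨w, rfl⟩ := hdvd
  rw [mul_comm] at *
  have h1 := hc_of_homog hu e
  rw [if_pos rfl] at h1
  rw [← h1]
  exact hc_mul_right_zero hg h
end

section
variable {p : MvPolynomial (Fin 2) ℂ}

lemma hc_ne_zero_of_mem {n : ℕ} (h : n ∈ p.support.image Finsupp.degree) :
    homogeneousComponent n p ≠ 0 := by
  obtain ⟨m, hm, hdeg⟩ := Finset.mem_image.mp h
  intro hz
  have := coeff_homogeneousComponent n p m
  rw [hz, MvPolynomial.coeff_zero, if_pos hdeg] at this
  exact (MvPolynomial.mem_support_iff.mp hm) this.symm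

lemma hc_zero_of_not_mem {n : ℕ} (h : n ∉ p.support.image Finsupp.degree) :
    homogeneousComponent n p = 0 := by
  ext d
  rw [coeff_homogeneousComponent, MvPolynomial.coeff_zero]
  split
  · next hd =>
    by_contra hc
    exact h (Finset.mem_image.mpr ⟨d, MvPolynomial.mem_support_iff.mpr hc, hd⟩)
  · rfl

lemma isHomog_of_mul_homog {a b : MvPolynomial (Fin 2) ℂ} {d : ℕ}
    (hab : (a * b).IsHomogeneous d) (ha : a ≠ 0) (hb : b ≠ 0) :
    ∃ k, a.IsHomogeneous k := by
  have hDa : (a.support.image Finsupp.degree).Nonempty :=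
    Finset.image_nonempty.mpr (MvPolynomial.support_nonempty.mpr ha)
  have hDb : (b.support.image Finsupp.degree).Nonempty :=
    Finset.image_nonempty.mpr (MvPolynomial.support_nonempty.mpr hb)
  set Da := a.support.image Finsupp.degree
  set Db := b.support.image Finsupp.degree
  set Ma := Da.max' hDa with hMa
  set ma := Da.min' hDa with hma
  set Mb := Db.max' hDb with hMb
  set mb := Db.min' hDb with hmb
  have haM : homogeneousComponent Ma a ≠ 0 := hc_ne_zero_of_mem (Da.max'_mem hDa)
  have ham : homogeneousComponent ma a ≠ 0 := hc_ne_zero_of_mem (Da.min'_mem hDa)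
  have hbM : homogeneousComponent Mb b ≠ 0 := hc_ne_zero_of_mem (Db.max'_mem hDb)
  have hbm : homogeneousComponent mb b ≠ 0 := hc_ne_zero_of_mem (Db.min'_mem hDb)
  have hMa_le : Ma ≤ a.totalDegree := by
    by_contra h; push_neg at h; exact haM (homogeneousComponent_eq_zero _ _ h)
  have hma_le : ma ≤ a.totalDegree := by
    by_contra h; push_neg at h; exact ham (homogeneousComponent_eq_zero _ _ h)
  have hMb_le : Mb ≤ b.totalDegree := by
    by_contra h; push_neg at h; exact hbM (homogeneousComponent_eq_zero _ _ h)
  have hmb_le : mb ≤ b.totalDegree := by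
    by_contra h; push_neg at h; exact hbm (homogeneousComponent_eq_zero _ _ h)
  have htop : homogeneousComponent (Ma + Mb) (a * b)
      = homogeneousComponent Ma a * homogeneousComponent Mb b := by
    apply hc_mul_pair a b Ma Mb hMa_le hMb_le
    intro k l hkl hk
    rcases Nat.lt_or_ge k Ma with h | h
    · have hl : Mb < l := by omega
      rw [hc_zero_of_not_mem (fun hmem => absurd (Db.le_max' l hmem) (by omega)), mul_zero]
    · have hk' : Ma < k := by omega
      rw [hc_zero_of_not_mem (fun hmem => absurd (Da.le_max' k hmem) (by omega)), zero_mul]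
  have hbot : homogeneousComponent (ma + mb) (a * b)
      = homogeneousComponent ma a * homogeneousComponent mb b := by
    apply hc_mul_pair a b ma mb hma_le hmb_le
    intro k l hkl hk
    rcases Nat.lt_or_ge k ma with h | h
    · rw [hc_zero_of_not_mem (fun hmem => absurd (Da.min'_le k hmem) (by omega)), zero_mul]
    · have hl : l < mb := by omega
      rw [hc_zero_of_not_mem (fun hmem => absurd (Db.min'_le l hmem) (by omega)), mul_zero]
  have hd1 : Ma + Mb = d := by
    by_contra hne
    rw [hc_of_homog hab (Ma + Mb), if_neg hne] at htop
    exact mul_ne_zero haM hbM htop.symm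
  have hd2 : ma + mb = d := by
    by_contra hne
    rw [hc_of_homog hab (ma + mb), if_neg hne] at hbot
    exact mul_ne_zero ham hbm hbot.symm
  have h1 : ma ≤ Ma := Da.min'_le _ (Da.max'_mem hDa)
  have h2 : mb ≤ Mb := Db.min'_le _ (Db.max'_mem hDb)
  have hEq : ma = Ma := by omega
  refine ⟨Ma, isHomog_of_coeff fun m hm => ?_⟩
  have hmem : m.degree ∈ Da :=
    Finset.mem_image_of_mem _ (MvPolynomial.mem_support_iff.mpr hm)
  have := Da.le_max' _ hmem
  have := Da.min'_le _ hmem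
  omega
end

section
variable {p f q : MvPolynomial (Fin 2) ℂ}

lemma coeff_zero_of_pderiv_zero {i : Fin 2} (hz : pderiv i p = 0) {m : Fin 2 →₀ ℕ}
    (hm : m i ≠ 0) : MvPolynomial.coeff m p = 0 := by
  set m' : Fin 2 →₀ ℕ := m - single i 1 with hm'
  have hexp : m' + single i 1 = m := by
    ext j
    by_cases hj : j = i
    · subst hj; simp [hm']; omega
    · simp [hm', Finsupp.single_apply, hj, Ne.symm hj]
  have hc := coeff_pderiv i m' p
  rw [hz, hexp, MvPolynomial.coeff_zero] at hc
  have hne : ((m' i + 1 : ℕ) : ℂ) ≠ 0 := Nat.cast_ne_zero.mpr (by omega)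
  exact ((mul_eq_zero.mp hc.symm).resolve_left hne)

lemma eq_C_of_homog_zero (hq : q.IsHomogeneous 0) : q = MvPolynomial.C (MvPolynomial.coeff 0 q) := by
  apply MvPolynomial.ext
  intro m
  rw [MvPolynomial.coeff_C]
  by_cases hm : (0 : Fin 2 →₀ ℕ) = m
  · rw [if_pos hm, hm]
  · rw [if_neg hm]
    apply hq.coeff_eq_zero
    rw [deg2]
    intro h
    apply hm
    ext j
    fin_cases j <;> simp <;> omega

lemma not_isUnit_X' (j : Fin 2) : ¬ IsUnit (X j : MvPolynomial (Fin 2) ℂ) := by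
  intro hu
  obtain ⟨v, hv⟩ := hu.exists_right_inv
  have := congrArg constantCoeff hv
  rw [map_mul, constantCoeff_X, zero_mul, map_one] at this
  exact zero_ne_one this

lemma pderiv_ne_zero {d : ℕ} (hd : 2 ≤ d) (hf : f.IsHomogeneous d) (hsf : Squarefree f)
    (i : Fin 2) : pderiv i f ≠ 0 := by
  intro hz
  have hfne : f ≠ 0 := hsf.ne_zero
  set j : Fin 2 := if i = 0 then 1 else 0 with hj
  have hclaim : ∀ m ∈ f.support, m = single j d := by
    intro m hm
    have hc := MvPolynomial.mem_support_iff.mp hm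
    have hmi : m i = 0 := by
      by_contra h; exact hc (coeff_zero_of_pderiv_zero hz h)
    have hdeg : m.degree = d := by
      by_contra h; exact hc (hf.coeff_eq_zero h)
    rw [deg2] at hdeg
    ext k
    fin_cases i <;> fin_cases k <;>
      simp_all [hj, Finsupp.single_apply] <;> omega
  have hsub : f.support ⊆ {single j d} := fun m hm => Finset.mem_singleton.mpr (hclaim m hm)
  have hfeq : f = monomial (single j d) (MvPolynomial.coeff (single j d) f) := by
    conv_lhs => rw [f.as_sum]
    rw [Finset.sum_subset hsub]
    · rw [Finset.sum_singleton]
    · intro m _ hm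
      rw [MvPolynomial.notMem_support_iff.mp hm, map_zero]
  have hdvd : X j * X j ∣ f := by
    refine ⟨monomial (single j (d - 2)) (MvPolynomial.coeff (single j d) f), ?_⟩
    conv_lhs => rw [hfeq]
    rw [show (X j * X j : MvPolynomial (Fin 2) ℂ) = monomial (single j 2) 1 by
      rw [← MvPolynomial.X_pow_eq_monomial, sq]]
    rw [monomial_mul, one_mul, ← Finsupp.single_add, show 2 + (d - 2) = d by omega]
  exact not_isUnit_X' j (hsf _ hdvd)

lemma relPrime_pderiv {d : ℕ} (hd : 2 ≤ d) (hf : f.IsHomogeneous d) (hsf : Squarefree f) :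
    IsRelPrime (pderiv 0 f) (pderiv 1 f) := by
  intro c hc0 hc1
  by_contra hcu
  have hfne : f ≠ 0 := hsf.ne_zero
  have hcne : c ≠ 0 := by
    rintro rfl
    exact pderiv_ne_zero hd hf hsf 0 (zero_dvd_iff.mp hc0)
  obtain ⟨q, hqirr, hqc⟩ := WfDvdMonoid.exists_irreducible_factor hcu hcne
  have hq0 : q ∣ pderiv 0 f := hqc.trans hc0
  have hq1 : q ∣ pderiv 1 f := hqc.trans hc1
  have hqprime : Prime q := UniqueFactorizationMonoid.irreducible_iff_prime.mp hqirr
  have hqf : q ∣ f := by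
    have h1 : q ∣ MvPolynomial.C (d : ℂ) * f := by
      rw [euler hf]
      exact dvd_add (Dvd.dvd.mul_left hq0 _) (Dvd.dvd.mul_left hq1 _)
    have hu : IsUnit (MvPolynomial.C (d : ℂ) : MvPolynomial (Fin 2) ℂ) := by
      refine (isUnit_iff_ne_zero.mpr ?_).map MvPolynomial.C
      exact_mod_cast Nat.cast_ne_zero.mpr (by omega)
    exact (hu.dvd_mul_left).mp h1
  obtain ⟨g, hg⟩ := hqf
  by_cases hqg : q ∣ g
  · obtain ⟨g', hg'⟩ := hqg
    have : q * q ∣ f := ⟨g', by rw [hg, hg', mul_assoc]⟩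
    exact hqirr.not_isUnit (hsf _ this)
  have hqdq : ∀ i : Fin 2, q ∣ pderiv i q := by
    intro i
    have h1 : q ∣ pderiv i q * g + q * pderiv i g := by
      rw [← pderiv_mul, ← hg]
      · fin_cases i
        · exact hq0
        · exact hq1
    have h2 : q ∣ pderiv i q * g := (dvd_add_right (Dvd.intro _ rfl)).mp (by rwa [add_comm] at h1)
    exact (hqprime.dvd_mul.mp h2).resolve_right hqg
  have hgne : g ≠ 0 := by rintro rfl; rw [mul_zero] at hg; exact hfne hg
  obtain ⟨k, hqhom⟩ : ∃ k, q.IsHomogeneous k := by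
    refine isHomog_of_mul_homog (d := d) ?_ hqprime.ne_zero hgne
    rw [← hg]; exact hf
  rcases Nat.eq_zero_or_pos k with hk | hk
  · subst hk
    have := eq_C_of_homog_zero hqhom
    have hcne0 : MvPolynomial.coeff 0 q ≠ 0 := by
      rintro h; rw [h, map_zero] at this; exact hqprime.ne_zero this
    exact hqirr.not_isUnit (this ▸ (isUnit_iff_ne_zero.mpr hcne0).map MvPolynomial.C)
  · obtain ⟨k', rfl⟩ : ∃ k', k = k' + 1 := ⟨k - 1, by omega⟩
    have hpz : ∀ i : Fin 2, pderiv i q = 0 := by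
      intro i
      exact homog_dvd_eq_zero (pderiv_isHomog i hqhom) hqhom (Nat.lt_succ_self k') (hqdq i)
    have := euler hqhom
    rw [hpz 0, hpz 1, mul_zero, mul_zero, add_zero] at this
    have hqz : q = 0 := by
      have hu : (MvPolynomial.C ((k' + 1 : ℕ) : ℂ) : MvPolynomial (Fin 2) ℂ) ≠ 0 := by
        rw [ne_eq, MvPolynomial.C_eq_zero]
        push_cast
        exact Nat.cast_add_one_ne_zero k'
      exact (mul_eq_zero.mp this).resolve_left hu
    exact hqprime.ne_zero hqz
end

section Basis

noncomputable def mexp (k : ℕ) (i : Fin (k + 1)) : Fin 2 →₀ ℕ :=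
  single 0 (i : ℕ) + single 1 (k - (i : ℕ))

lemma mexp_apply0 (k : ℕ) (i : Fin (k + 1)) : mexp k i 0 = (i : ℕ) := by
  simp [mexp]

lemma mexp_apply1 (k : ℕ) (i : Fin (k + 1)) : mexp k i 1 = k - (i : ℕ) := by
  simp [mexp]

lemma mexp_degree (k : ℕ) (i : Fin (k + 1)) : (mexp k i).degree = k := by
  rw [deg2, mexp_apply0, mexp_apply1]
  omega

lemma mexp_inj (k : ℕ) : Function.Injective (mexp k) := by
  intro i j h
  have := congrArg (fun m : Fin 2 →₀ ℕ => m 0) h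
  simp only [mexp_apply0] at this
  exact Fin.ext this

lemma mexp_eq_of (k : ℕ) {m : Fin 2 →₀ ℕ} (hm : m.degree = k) :
    mexp k ⟨m 0, by rw [deg2] at hm; omega⟩ = m := by
  ext j
  rw [deg2] at hm
  fin_cases j <;> simp [mexp, Finsupp.single_apply] <;> omega

noncomputable def homogElt (k : ℕ) (i : Fin (k + 1)) :
    homogeneousSubmodule (Fin 2) ℂ k :=
  ⟨monomial (mexp k i) 1,
    (mem_homogeneousSubmodule _ _).mpr (isHomogeneous_monomial 1 (mexp_degree k i))⟩

lemma homogElt_li (k : ℕ) : LinearIndependent ℂ (homogElt k) := by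
  have h2 : LinearIndependent ℂ (fun i : Fin (k+1) =>
      ((basisMonomials (Fin 2) ℂ) (mexp k i))) :=
    (basisMonomials (Fin 2) ℂ).linearIndependent.comp (mexp k) (mexp_inj k)
  have h3 : LinearIndependent ℂ (fun i : Fin (k+1) =>
      ((homogeneousSubmodule (Fin 2) ℂ k).subtype (homogElt k i))) := by
    convert h2 using 2 with i
    try simp [homogElt, coe_basisMonomials]
  exact h3.of_comp _

lemma homogElt_repr (k : ℕ) (x : homogeneousSubmodule (Fin 2) ℂ k) :
    (x : MvPolynomial (Fin 2) ℂ)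
      = ∑ i : Fin (k + 1), MvPolynomial.coeff (mexp k i) (x : MvPolynomial (Fin 2) ℂ)
          • (monomial (mexp k i) (1 : ℂ)) := by
  obtain ⟨p, hp⟩ := x
  have hph : p.IsHomogeneous k := (mem_homogeneousSubmodule _ _).mp hp
  simp only
  apply MvPolynomial.ext
  intro m
  rw [MvPolynomial.coeff_sum]
  have hterm : ∀ i : Fin (k+1),
      MvPolynomial.coeff m (MvPolynomial.coeff (mexp k i) p • monomial (mexp k i) (1:ℂ))
        = if mexp k i = m then MvPolynomial.coeff m p else 0 := by
    intro i
    rw [MvPolynomial.coeff_smul, MvPolynomial.coeff_monomial]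
    by_cases h : mexp k i = m
    · rw [if_pos h, if_pos h, h, smul_eq_mul, mul_one]
    · rw [if_neg h, if_neg h, smul_zero]
  rw [Finset.sum_congr rfl fun i _ => hterm i]
  by_cases hdm : m.degree = k
  · set i₀ : Fin (k+1) := ⟨m 0, by rw [deg2] at hdm; omega⟩ with hi₀
    rw [Finset.sum_eq_single i₀]
    · rw [if_pos (mexp_eq_of k hdm)]
    · intro i _ hne
      rw [if_neg]
      intro h
      apply hne
      apply mexp_inj k
      rw [h, ← mexp_eq_of k hdm]
    · intro h; exact absurd (Finset.mem_univ i₀) h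
  · rw [hph.coeff_eq_zero hdm]
    simp
lemma homogElt_span (k : ℕ) :
    ⊤ ≤ Submodule.span ℂ (Set.range (homogElt k)) := by
  intro x _
  have hx : x = ∑ i : Fin (k + 1),
      MvPolynomial.coeff (mexp k i) (x : MvPolynomial (Fin 2) ℂ) • homogElt k i := by
    apply Subtype.ext
    push_cast
    exact homogElt_repr k x
  rw [hx]
  exact Submodule.sum_mem _ fun i _ =>
    Submodule.smul_mem _ _ (Submodule.subset_span (Set.mem_range_self i))

noncomputable def homogBasis (k : ℕ) :
    Module.Basis (Fin (k + 1)) ℂ (homogeneousSubmodule (Fin 2) ℂ k) :=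
  Module.Basis.mk (homogElt_li k) (homogElt_span k)

instance homogFD (k : ℕ) : FiniteDimensional ℂ (homogeneousSubmodule (Fin 2) ℂ k) :=
  Module.Finite.of_basis (homogBasis k)

lemma homogFinrank (k : ℕ) :
    Module.finrank ℂ (homogeneousSubmodule (Fin 2) ℂ k) = k + 1 := by
  rw [Module.finrank_eq_card_basis (homogBasis k), Fintype.card_fin]

end Basis

section Jac
variable {f : MvPolynomial (Fin 2) ℂ}

lemma mem_jac_iff {m n : ℕ} (h0 : (pderiv 0 f).IsHomogeneous m)
    (h1 : (pderiv 1 f).IsHomogeneous m) {h : MvPolynomial (Fin 2) ℂ}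
    (hh : h.IsHomogeneous (n + m)) :
    h ∈ jacIdeal f ↔ ∃ u v : MvPolynomial (Fin 2) ℂ,
      u.IsHomogeneous n ∧ v.IsHomogeneous n ∧ u * pderiv 0 f + v * pderiv 1 f = h := by
  constructor
  · intro hmem
    obtain ⟨a, b, hab⟩ := Ideal.mem_span_pair.mp hmem
    refine ⟨homogeneousComponent n a, homogeneousComponent n b,
      homogeneousComponent_isHomogeneous n a, homogeneousComponent_isHomogeneous n b, ?_⟩
    have := congrArg (homogeneousComponent (n + m)) hab
    rw [map_add, hc_mul_right h0 n, hc_mul_right h1 n, hc_of_homog hh, if_pos rfl] at this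
    exact this
  · rintro ⟨u, v, _, _, rfl⟩
    exact Ideal.mem_span_pair.mpr ⟨u, v, rfl⟩

lemma mem_jac_low {m n : ℕ} (h0 : (pderiv 0 f).IsHomogeneous m)
    (h1 : (pderiv 1 f).IsHomogeneous m) (hnm : n < m) {h : MvPolynomial (Fin 2) ℂ}
    (hh : h.IsHomogeneous n) (hmem : h ∈ jacIdeal f) : h = 0 := by
  obtain ⟨a, b, hab⟩ := Ideal.mem_span_pair.mp hmem
  have := congrArg (homogeneousComponent n) hab
  rw [map_add, hc_mul_right_zero h0 hnm, hc_mul_right_zero h1 hnm, hc_of_homog hh,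
    if_pos rfl, add_zero] at this
  exact this.symm

end Jac

end Aux

/-- If `f ∈ ℂ[X₀,X₁]` is homogeneous of degree `d ≥ 2` and squarefree, then
`R_f^{2d−4} = S^{2d−4}/(S^{2d−4} ∩ J_f)` is one-dimensional: there is an `h ∈ S^{2d−4}` with
`h ∉ J_f`, and for any `h, h′ ∈ S^{2d−4}` with `h ∉ J_f` there is `c ∈ ℂ` with
`h′ − c·h ∈ J_f`. -/
theorem stmt6 (d : ℕ) (hd : 2 ≤ d) (f : MvPolynomial (Fin 2) ℂ)
    (hf : f.IsHomogeneous d) (hsf : Squarefree f) :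
    (∃ h : MvPolynomial (Fin 2) ℂ, h.IsHomogeneous (2 * d - 4) ∧ h ∉ jacIdeal f) ∧
      ∀ h h' : MvPolynomial (Fin 2) ℂ, h.IsHomogeneous (2 * d - 4) →
        h'.IsHomogeneous (2 * d - 4) → h ∉ jacIdeal f →
          ∃ c : ℂ, h' - c • h ∈ jacIdeal f := by
  rcases eq_or_lt_of_le hd with hd2 | hd3
  · -- d = 2
    have hD : 2 * d - 4 = 0 := by omega
    rw [hD]
    have h0 : (pderiv 0 f).IsHomogeneous 1 := by
      apply pderiv_isHomog; rwa [show (1 + 1 : ℕ) = d by omega]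
    have h1 : (pderiv 1 f).IsHomogeneous 1 := by
      apply pderiv_isHomog; rwa [show (1 + 1 : ℕ) = d by omega]
    constructor
    · refine ⟨1, isHomogeneous_one _ _, fun hmem => ?_⟩
      exact one_ne_zero (mem_jac_low h0 h1 Nat.zero_lt_one (isHomogeneous_one _ _) hmem)
    · intro h h' hh hh' hnot
      obtain ⟨c1, rfl⟩ : ∃ c1, h = MvPolynomial.C c1 := ⟨_, eq_C_of_homog_zero hh⟩
      obtain ⟨c2, rfl⟩ : ∃ c2, h' = MvPolynomial.C c2 := ⟨_, eq_C_of_homog_zero hh'⟩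
      have hc0 : c1 ≠ 0 := by
        rintro rfl
        rw [map_zero] at hnot
        exact hnot ((jacIdeal f).zero_mem)
      refine ⟨c2 / c1, ?_⟩
      rw [MvPolynomial.smul_eq_C_mul, ← MvPolynomial.C_mul, div_mul_cancel₀ _ hc0, sub_self]
      exact (jacIdeal f).zero_mem
  · -- d ≥ 3
    obtain ⟨e, rfl⟩ : ∃ e, d = e + 3 := ⟨d - 3, by omega⟩
    have hD : 2 * (e + 3) - 4 = e + (e + 2) := by omega
    rw [hD]
    have h0 : (pderiv 0 f).IsHomogeneous (e + 2) := pderiv_isHomog 0 hf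
    have h1 : (pderiv 1 f).IsHomogeneous (e + 2) := pderiv_isHomog 1 hf
    have hrp : IsRelPrime (pderiv 0 f) (pderiv 1 f) := relPrime_pderiv hd hf hsf
    have hF1ne : pderiv 1 f ≠ 0 := pderiv_ne_zero hd hf hsf 1
    set V := homogeneousSubmodule (Fin 2) ℂ (e + (e + 2)) with hV
    set U := homogeneousSubmodule (Fin 2) ℂ e with hU
    set W : Submodule ℂ V :=
      Submodule.comap V.subtype (Submodule.restrictScalars ℂ (jacIdeal f)) with hW
    have hWmem : ∀ x : V, x ∈ W ↔ (x : MvPolynomial (Fin 2) ℂ) ∈ jacIdeal f :=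
      fun x => Iff.rfl
    let Φ : (U × U) →ₗ[ℂ] V :=
      { toFun := fun uv => ⟨(uv.1 : MvPolynomial (Fin 2) ℂ) * pderiv 0 f
            + (uv.2 : MvPolynomial (Fin 2) ℂ) * pderiv 1 f,
          (mem_homogeneousSubmodule _ _).mpr
            ((((mem_homogeneousSubmodule _ _).mp uv.1.2).mul h0).add
              (((mem_homogeneousSubmodule _ _).mp uv.2.2).mul h1))⟩
        map_add' := by
          intro x y
          apply Subtype.ext
          simp only [Prod.fst_add, Prod.snd_add, Submodule.coe_add]
          ring
        map_smul' := by
          intro c x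
          apply Subtype.ext
          simp only [Prod.smul_fst, Prod.smul_snd, Submodule.coe_smul, RingHom.id_apply]
          rw [smul_add, smul_mul_assoc, smul_mul_assoc] }
    have hΦcoe : ∀ uv : U × U, (Φ uv : MvPolynomial (Fin 2) ℂ)
        = (uv.1 : MvPolynomial (Fin 2) ℂ) * pderiv 0 f
          + (uv.2 : MvPolynomial (Fin 2) ℂ) * pderiv 1 f := fun _ => rfl
    have hΦinj : Function.Injective Φ := by
      rw [injective_iff_map_eq_zero]
      rintro ⟨⟨u, hu⟩, ⟨v, hv⟩⟩ hz
      have h' : u * pderiv 0 f + v * pderiv 1 f = 0 := by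
        have := congrArg (fun y : V => (y : MvPolynomial (Fin 2) ℂ)) hz
        simpa [hΦcoe] using this
      have hdvd : pderiv 1 f ∣ u * pderiv 0 f := ⟨-v, by linear_combination h'⟩
      have hdu : pderiv 1 f ∣ u := hrp.symm.dvd_of_dvd_mul_right hdvd
      have hu0 : u = 0 :=
        homog_dvd_eq_zero ((mem_homogeneousSubmodule _ _).mp hu) h1 (by omega) hdu
      have hv0 : v = 0 := by
        rw [hu0, zero_mul, zero_add] at h'
        exact (mul_eq_zero.mp h').resolve_right hF1ne
      simp only [Prod.mk_eq_zero, Submodule.mk_eq_zero]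
      exact ⟨hu0, hv0⟩
    have hrange : LinearMap.range Φ = W := by
      apply le_antisymm
      · rintro x ⟨⟨u, v⟩, rfl⟩
        rw [hWmem]
        rw [hΦcoe]
        exact Ideal.mem_span_pair.mpr ⟨u, v, rfl⟩
      · rintro x hx
        have hxh : (x : MvPolynomial (Fin 2) ℂ).IsHomogeneous (e + (e + 2)) :=
          (mem_homogeneousSubmodule _ _).mp x.2
        obtain ⟨u, v, hu, hv, heq⟩ := (mem_jac_iff h0 h1 hxh).mp ((hWmem x).mp hx)
        exact ⟨(⟨u, (mem_homogeneousSubmodule _ _).mpr hu⟩,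
          ⟨v, (mem_homogeneousSubmodule _ _).mpr hv⟩), Subtype.ext heq⟩
    have hWrank : Module.finrank ℂ W = (e + 1) + (e + 1) := by
      rw [← hrange, LinearMap.finrank_range_of_inj hΦinj, Module.finrank_prod, hU,
        homogFinrank]
    have hVrank : Module.finrank ℂ V = (e + (e + 2)) + 1 := homogFinrank _
    have hq := Submodule.finrank_quotient_add_finrank W
    have hQ1 : Module.finrank ℂ (V ⧸ W) = 1 := by omega
    constructor
    · by_contra hno
      push_neg at hno
      have hWtop : W = ⊤ := by
        rw [eq_top_iff]
        intro x _
        exact (hWmem x).mpr (hno x ((mem_homogeneousSubmodule _ _).mp x.2))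
      rw [hWtop, finrank_top] at hWrank
      omega
    · intro h h' hh hh' hnot
      set x : V := ⟨h, (mem_homogeneousSubmodule _ _).mpr hh⟩ with hx
      set x' : V := ⟨h', (mem_homogeneousSubmodule _ _).mpr hh'⟩ with hx'
      have hxW : x ∉ W := fun hmem => hnot ((hWmem x).mp hmem)
      have hmk : (Submodule.Quotient.mk x : V ⧸ W) ≠ 0 := by
        rw [ne_eq, Submodule.Quotient.mk_eq_zero]
        exact hxW
      obtain ⟨c, hc⟩ := ((finrank_eq_one_iff_of_nonzero' _ hmk).mp hQ1)
        (Submodule.Quotient.mk x')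
      refine ⟨c, ?_⟩
      have hsub : x' - c • x ∈ W := by
        rw [← Submodule.Quotient.mk_eq_zero, Submodule.Quotient.mk_sub,
          Submodule.Quotient.mk_smul, hc, sub_self]
      have := (hWmem _).mp hsub
      simpa using this
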